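/- Let n ≥ 1 be an integer and set m = (6(2n+1))^2 − 2. If m is squarefree, then the class number h(m) of the real quadratic field ℚ(√m) is strictly greater than 1. -/

import Mathlib

open Polynomial

private lemma aux_mod32 : ∀ a b : ZMod 32, a ^ 2 - 2 * b ^ 2 ≠ 12 ∧ a ^ 2 - 2 * b ^ 2 ≠ 20 := by
  decide

/-- If `n ≥ 1` is an integer and `m = (6(2n+1))^2 - 2` is squarefree,
then the class number of the real quadratic field `ℚ(√m)` is strictly greater than `1`. -/
theorem stmt_4 (n : ℕ) (hn : 1 ≤ n) (m : ℕ) (hm : m = (6 * (2 * n + 1)) ^ 2 - 2)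
    (hsf : Squarefree m) (K : Type*) [Field K] [NumberField K]
    (hK : IsSplittingField ℚ K (X ^ 2 - C (m : ℚ))) :
    1 < NumberField.classNumber K := by
  -- arithmetic facts about m
  have hpos : 0 < (2*n+1)^2 := by positivity
  have hexp : (6*(2*n+1))^2 = 36*(2*n+1)^2 := by ring
  have hm2 : m + 2 = 36 * (2*n+1)^2 := by omega
  obtain ⟨k, hk⟩ := (Nat.even_mul_succ_self n).exists_two_nsmul _
  have hk2 : n*(n+1) = 2*k := by simpa [two_nsmul] using hk
  have hexp2 : (2*n+1)^2 = 4*(n*(n+1)) + 1 := by ring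
  have h9 : 9 ≤ (2*n+1)^2 := by nlinarith
  have hm32 : m = 32*(9*k+1) + 2 := by omega
  have hm322 : 322 ≤ m := by omega
  have hm3c : m = 3*(12*(2*n+1)^2 - 1) + 1 := by omega
  clear hm hm2 hk hk2 hexp hexp2 h9 hpos hn
  -- the square root of m in K
  have hdeg : (X ^ 2 - C (m : ℚ)).degree = 2 := degree_X_pow_sub_C (by norm_num) _
  obtain ⟨s, hs⟩ := Splits.exists_eval_eq_zero hK.splits' (by rw [degree_map, hdeg]; exact two_ne_zero)
  have hs2 : s ^ 2 = (m : K) := by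
    have h0 : s ^ 2 - algebraMap ℚ K (m : ℚ) = 0 := by simpa using hs
    have h2 : algebraMap ℚ K (m : ℚ) = (m : K) := by push_cast; simp
    rw [← h2]; linear_combination h0
  have hints : IsIntegral ℤ s :=
    ⟨X ^ 2 - C (m : ℤ), monic_X_pow_sub_C _ two_ne_zero, by simp [hs2]⟩
  have hinj : Function.Injective (algebraMap ℚ K) := (algebraMap ℚ K).injective
  -- m is not a rational square
  have hnsq : ∀ q : ℚ, q ^ 2 ≠ (m : ℚ) := by
    intro q hq
    have hint : IsIntegral ℤ q := ⟨X ^ 2 - C (m : ℤ),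
      monic_X_pow_sub_C _ two_ne_zero, by simp [← hq]⟩
    obtain ⟨z, hz⟩ := IsIntegrallyClosed.isIntegral_iff.mp hint
    have hz2 : z ^ 2 = (m : ℤ) := by
      have : ((z : ℚ)) ^ 2 = (m : ℚ) := by rw [show ((z:ℤ):ℚ) = q from hz]; exact hq
      exact_mod_cast this
    have hdvd : z.natAbs * z.natAbs ∣ m := by
      refine dvd_of_eq ?_
      have : (↑(z.natAbs * z.natAbs) : ℤ) = (m : ℤ) := by
        rw [Nat.cast_mul, Int.natAbs_mul_self', ← sq]; exact hz2
      exact_mod_cast this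
    have h1 : z.natAbs = 1 := Nat.isUnit_iff.mp (hsf _ hdvd)
    have hm1 : m = 1 := by
      have : (m : ℤ) = 1 := by rw [← hz2, sq, ← Int.natAbs_mul_self', h1]; norm_num
      exact_mod_cast this
    omega
  -- uniqueness of representation
  have huniq : ∀ x y : ℚ, algebraMap ℚ K x + algebraMap ℚ K y * s = 0 → x = 0 ∧ y = 0 := by
    intro x y h
    by_cases hy : y = 0
    · subst hy
      simp only [map_zero, zero_mul, add_zero] at h
      exact ⟨hinj (by simpa using h), rfl⟩
    · exfalso
      have hyK : algebraMap ℚ K y ≠ 0 := fun hc => hy (hinj (by simpa using hc))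
      have hsval : s = algebraMap ℚ K (-(x/y)) := by
        rw [map_neg, map_div₀, neg_div', eq_div_iff hyK]
        linear_combination h
      apply hnsq (x/y)
      have h1 : (m : K) = algebraMap ℚ K ((x/y)^2) := by
        rw [← hs2, hsval]; push_cast; ring
      have h2 : algebraMap ℚ K ((x/y)^2) = algebraMap ℚ K ((m:ℚ)) := by
        rw [← h1]; push_cast; simp
      exact hinj h2
  have hmK : algebraMap ℚ K ((m:ℚ)) = (m : K) := by push_cast; simp
  -- every element of K is x + y √m
  have hrep : ∀ a : K, ∃ x y : ℚ, a = algebraMap ℚ K x + algebraMap ℚ K y * s := by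
    set T : Subalgebra ℚ K :=
      { carrier := {a | ∃ x y : ℚ, a = algebraMap ℚ K x + algebraMap ℚ K y * s}
        mul_mem' := by
          rintro a b ⟨xa, ya, rfl⟩ ⟨xb, yb, rfl⟩
          refine ⟨xa*xb + m*ya*yb, xa*yb + xb*ya, ?_⟩
          push_cast [map_add, map_mul]
          linear_combination (algebraMap ℚ K ya * algebraMap ℚ K yb) * hs2
        add_mem' := by
          rintro a b ⟨xa, ya, rfl⟩ ⟨xb, yb, rfl⟩
          exact ⟨xa + xb, ya + yb, by push_cast [map_add]; ring⟩
        algebraMap_mem' := fun r => ⟨r, 0, by simp⟩ } with hT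
    have hsT : s ∈ T := ⟨0, 1, by simp⟩
    have hTtop : T = ⊤ := by
      refine le_antisymm le_top ?_
      rw [← hK.adjoin_rootSet]
      refine Algebra.adjoin_le ?_
      intro r hr
      rw [mem_rootSet] at hr
      have hr2 : r ^ 2 = (m : K) := by
        have := hr.2
        simp only [map_sub, map_pow, aeval_X, aeval_C] at this
        rw [← hmK]; linear_combination this
      have hrs : (r - s) * (r + s) = 0 := by
        rw [← hs2] at hr2; linear_combination hr2
      rcases mul_eq_zero.mp hrs with h | h
      · have : r = s := by linear_combination h
        rw [this]; exact hsT
      · have : r = -s := by linear_combination h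
        rw [this]; exact ⟨0, -1, by simp⟩
    intro a
    have : a ∈ T := hTtop ▸ Algebra.mem_top
    exact this
  -- coefficients of integral elements
  have hcoeff : ∀ x y : ℚ, IsIntegral ℤ (algebraMap ℚ K x + algebraMap ℚ K y * s) →
      (∃ X : ℤ, (X : ℚ) = 2 * x) ∧ (∃ N : ℤ, (N : ℚ) = x ^ 2 - m * y ^ 2) := by
    intro x y hint
    by_cases hy : y = 0
    · subst hy
      rw [map_zero, zero_mul, add_zero, isIntegral_algebraMap_iff hinj] at hint
      obtain ⟨z, hz⟩ := IsIntegrallyClosed.isIntegral_iff.mp hint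
      have hz' : (z : ℚ) = x := hz
      exact ⟨⟨2 * z, by push_cast; rw [hz']⟩, ⟨z ^ 2, by push_cast; rw [hz']; ring⟩⟩
    · set a := algebraMap ℚ K x + algebraMap ℚ K y * s with ha
      set P : ℚ[X] := X ^ 2 - (C (2 * x) * X - C (x ^ 2 - (m : ℚ) * y ^ 2)) with hP
      have hPmonic : P.Monic := by
        apply monic_X_pow_sub
        refine lt_of_le_of_lt ((degree_sub_le _ _).trans (max_le (degree_C_mul_X_le _)
          (degree_C_le.trans (by decide)))) (by decide)
      have hProot : aeval a P = 0 := by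
        simp only [hP, map_sub, map_pow, map_mul, aeval_X, aeval_C, ha]
        push_cast [map_add, map_mul, map_sub, map_pow, map_ofNat]
        linear_combination (algebraMap ℚ K y)^2 * hs2
      have hintQ : IsIntegral ℚ a := hint.tower_top
      have hdvd := minpoly.dvd ℚ a hProot
      have hPdeg : P.natDegree = 2 := by
        rw [hP]; compute_degree!
      have hdeg2 : 2 ≤ (minpoly ℚ a).natDegree := by
        by_contra hlt
        push_neg at hlt
        interval_cases h : (minpoly ℚ a).natDegree
        · exact (minpoly.natDegree_pos hintQ).ne' h
        · obtain ⟨r, hr⟩ := minpoly.mem_range_of_degree_eq_one ℚ a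
            (by rw [degree_eq_natDegree (minpoly.ne_zero hintQ), h]; rfl)
          have h0 : algebraMap ℚ K (x - r) + algebraMap ℚ K y * s = 0 := by
            rw [map_sub]; rw [ha] at hr; linear_combination -hr
          exact hy (huniq _ _ h0).2
      have hmin : minpoly ℚ a = P :=
        (eq_of_monic_of_dvd_of_natDegree_le (minpoly.monic hintQ) hPmonic hdvd
          (hPdeg ▸ hdeg2)).symm
      have hfrac := minpoly.isIntegrallyClosed_eq_field_fractions' ℚ hint
      rw [hmin] at hfrac
      constructor
      · refine ⟨-((minpoly ℤ a).coeff 1), ?_⟩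
        have := congrArg (fun p => p.coeff 1) hfrac
        simp only [hP, coeff_map, coeff_sub, coeff_X_pow, coeff_C_mul, coeff_X, coeff_C] at this
        norm_num at this
        push_cast
        linarith [this]
      · refine ⟨(minpoly ℤ a).coeff 0, ?_⟩
        have := congrArg (fun p => p.coeff 0) hfrac
        simp only [hP, coeff_map, coeff_sub, coeff_X_pow, coeff_C_mul, coeff_X, coeff_C] at this
        norm_num at this
        linarith [this]
  -- master integrality lemma
  have hm0 : (m : ℚ) ≠ 0 := by positivity
  have hmaster : ∀ x y : ℚ, IsIntegral ℤ (algebraMap ℚ K x + algebraMap ℚ K y * s) →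
      ∃ X Y N : ℤ, (X : ℚ) = 2 * x ∧ (Y : ℚ) = 2 * y ∧ (N : ℚ) = x ^ 2 - m * y ^ 2 ∧
        X ^ 2 - m * Y ^ 2 = 4 * N := by
    intro x y hint
    obtain ⟨⟨X, hX⟩, ⟨N, hN⟩⟩ := hcoeff x y hint
    have hmuls : algebraMap ℚ K ((m : ℚ) * y) + algebraMap ℚ K x * s =
        (algebraMap ℚ K x + algebraMap ℚ K y * s) * s := by
      push_cast [map_mul]
      linear_combination -(algebraMap ℚ K y) * hs2
    have hints2 : IsIntegral ℤ (algebraMap ℚ K ((m : ℚ) * y) + algebraMap ℚ K x * s) := by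
      rw [hmuls]; exact hint.mul hints
    obtain ⟨⟨kk, hkk⟩, -⟩ := hcoeff _ _ hints2
    have hsq : (m : ℚ) * (2 * y) ^ 2 = (X : ℚ) ^ 2 - 4 * N := by
      rw [hX, hN]; ring
    have hk2' : kk ^ 2 = (m : ℤ) * (X ^ 2 - 4 * N) := by
      have : (kk : ℚ) ^ 2 = (m : ℚ) * ((X : ℚ) ^ 2 - 4 * N) := by
        rw [hkk, ← hsq]; ring
      exact_mod_cast this
    have hmdvd : (m : ℤ) ∣ kk := by
      have hsfz : Squarefree (m : ℤ) := Int.squarefree_natCast.mpr hsf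
      exact (hsfz.dvd_pow_iff_dvd two_ne_zero).mp ⟨X ^ 2 - 4 * N, hk2'⟩
    obtain ⟨Y, hY⟩ := hmdvd
    have hYq : (Y : ℚ) = 2 * y := by
      have h1 : (m : ℚ) * (Y : ℚ) = (kk : ℚ) := by
        exact_mod_cast congrArg (fun z : ℤ => (z : ℚ)) hY.symm
      rw [hkk] at h1
      apply mul_left_cancel₀ hm0
      rw [h1]; ring
    refine ⟨X, Y, N, hX, hYq, hN, ?_⟩
    have : (X : ℚ) ^ 2 - (m : ℚ) * (Y : ℚ) ^ 2 = 4 * N := by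
      rw [hX, hYq, hN]; ring
    exact_mod_cast this
  -- no element of norm ±3
  have hmz : ((m : ℕ) : ZMod 32) = 2 := by
    rw [hm32]; push_cast; rw [show ((32 : ZMod 32)) = 0 from by decide]; ring
  have hno3 : ∀ x y : ℚ, IsIntegral ℤ (algebraMap ℚ K x + algebraMap ℚ K y * s) →
      x ^ 2 - m * y ^ 2 ≠ 3 ∧ x ^ 2 - m * y ^ 2 ≠ -3 := by
    intro x y hint
    obtain ⟨X, Y, N, hX, hY, hN, heq⟩ := hmaster x y hint
    constructor
    · intro hcon
      have hN3 : N = 3 := by exact_mod_cast hN.trans hcon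
      rw [hN3] at heq
      have := congrArg (fun z : ℤ => (z : ZMod 32)) heq
      push_cast at this
      rw [hmz] at this
      exact (aux_mod32 (X : ZMod 32) (Y : ZMod 32)).1 (by linear_combination this)
    · intro hcon
      have hN3 : N = -3 := by exact_mod_cast hN.trans hcon
      rw [hN3] at heq
      have := congrArg (fun z : ℤ => (z : ZMod 32)) heq
      push_cast at this
      rw [hmz] at this
      have h20 : ((-12 : ℤ) : ZMod 32) = 20 := by decide
      exact (aux_mod32 (X : ZMod 32) (Y : ZMod 32)).2 (by
        rw [show (20 : ZMod 32) = ((-12 : ℤ) : ZMod 32) from by decide]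
        push_cast
        linear_combination this)
  -- main proof
  by_contra hlt
  have hcard : 0 < NumberField.classNumber K := Fintype.card_pos
  have h1 : NumberField.classNumber K = 1 := by omega
  haveI hPID : IsPrincipalIdealRing (NumberField.RingOfIntegers K) :=
    NumberField.classNumber_eq_one_iff.mp h1
  -- helper: no integral element has coordinate x with 3x = ±1
  have hfinal : ∀ x : ℚ, (∃ X : ℤ, (X:ℚ) = 2*x) → (3*x + 1 = 0 ∨ 3*x - 1 = 0) → False := by
    rintro x ⟨X, hX⟩ h
    have h3 : (3:ℚ) * X = -2 ∨ (3:ℚ) * X = 2 := by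
      rcases h with h | h
      · exact Or.inl (by rw [hX]; linarith)
      · exact Or.inr (by rw [hX]; linarith)
    rcases h3 with h' | h'
    · have h'' : (3:ℤ) * X = -2 := by exact_mod_cast h'
      omega
    · have h'' : (3:ℤ) * X = 2 := by exact_mod_cast h'
      omega
  -- units from norm ±1
  have hunit : ∀ (w : NumberField.RingOfIntegers K) (x y : ℚ),
      (w : K) = algebraMap ℚ K x + algebraMap ℚ K y * s →
      (x ^ 2 - m * y ^ 2 = 1 ∨ x ^ 2 - m * y ^ 2 = -1) → IsUnit w := by
    intro w x y hw hN
    obtain ⟨⟨X, hX⟩, -⟩ := hcoeff x y (by rw [← hw]; exact w.isIntegral_coe)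
    have h1' : (algebraMap (NumberField.RingOfIntegers K) K) (X : NumberField.RingOfIntegers K)
        = algebraMap ℚ K (2*x) := by
      rw [← hX]; push_cast; simp
    have hcK : (((X : NumberField.RingOfIntegers K) - w : NumberField.RingOfIntegers K) : K)
        = algebraMap ℚ K x - algebraMap ℚ K y * s := by
      simp only [map_sub]
      rw [h1', show (algebraMap (NumberField.RingOfIntegers K) K) w
        = algebraMap ℚ K x + algebraMap ℚ K y * s from hw]
      push_cast [map_mul, map_add, map_ofNat]
      ring
    have hprod : (w : K) * (((X : NumberField.RingOfIntegers K) - w :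
        NumberField.RingOfIntegers K) : K) = algebraMap ℚ K (x ^ 2 - m * y ^ 2) := by
      rw [hw, hcK]
      push_cast [map_sub, map_mul, map_pow]
      linear_combination -(algebraMap ℚ K y)^2 * hs2
    rcases hN with h | h
    · refine IsUnit.of_mul_eq_one (a := w) ((X : NumberField.RingOfIntegers K) - w) ?_
      rw [← NumberField.RingOfIntegers.eq_iff]
      simp only [map_mul, map_one]
      rw [hprod, h, map_one]
    · refine IsUnit.of_mul_eq_one (a := w) (-((X : NumberField.RingOfIntegers K) - w)) ?_
      rw [← NumberField.RingOfIntegers.eq_iff]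
      simp only [map_mul, map_one, map_neg]
      rw [mul_neg, hprod, h]
      norm_num
  -- 3 is not a unit
  have h3ne : ¬ IsUnit (3 : NumberField.RingOfIntegers K) := by
    intro hu
    obtain ⟨v, hv⟩ := isUnit_iff_exists_inv.mp hu
    obtain ⟨x, y, hxy⟩ := hrep (v : K)
    have hvK : (3 : K) * (v : K) = 1 := by
      have := congrArg (algebraMap (NumberField.RingOfIntegers K) K) hv
      simpa only [map_mul, map_one, map_ofNat] using this
    rw [hxy] at hvK
    have h0 : algebraMap ℚ K (3*x - 1) + algebraMap ℚ K (3*y) * s = 0 := by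
      push_cast [map_sub, map_mul, map_one, map_ofNat]
      linear_combination hvK
    obtain ⟨h1', h2'⟩ := huniq _ _ h0
    exact hfinal x (hcoeff x y (by rw [← hxy]; exact v.isIntegral_coe)).1
      (Or.inr (by linarith))
  -- 3 is irreducible
  have h3irr : Irreducible (3 : NumberField.RingOfIntegers K) := by
    refine ⟨h3ne, ?_⟩
    intro a b hab
    obtain ⟨xa, ya, hxa⟩ := hrep (a : K)
    obtain ⟨xb, yb, hxb⟩ := hrep (b : K)
    have hK3 : (3 : K) = (a : K) * (b : K) := by
      have := congrArg (algebraMap (NumberField.RingOfIntegers K) K) hab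
      simpa only [map_mul, map_ofNat] using this
    rw [hxa, hxb] at hK3
    have h0 : algebraMap ℚ K (xa*xb + m*ya*yb - 3) + algebraMap ℚ K (xa*yb + xb*ya) * s = 0 := by
      push_cast [map_add, map_sub, map_mul, map_ofNat]
      linear_combination -hK3 - (algebraMap ℚ K ya * algebraMap ℚ K yb) * hs2
    obtain ⟨e1, e2⟩ := huniq _ _ h0
    obtain ⟨-, ⟨Na, hNa⟩⟩ := hcoeff xa ya (by rw [← hxa]; exact a.isIntegral_coe)
    obtain ⟨-, ⟨Nb, hNb⟩⟩ := hcoeff xb yb (by rw [← hxb]; exact b.isIntegral_coe)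
    have h9 : Na * Nb = 9 := by
      have : (Na : ℚ) * Nb = 9 := by
        rw [hNa, hNb]
        linear_combination (xa*xb + m*ya*yb + 3) * e1 - ((m:ℚ)*(xa*yb + xb*ya)) * e2
      exact_mod_cast this
    have hna3 := hno3 xa ya (by rw [← hxa]; exact a.isIntegral_coe)
    have hnb3 := hno3 xb yb (by rw [← hxb]; exact b.isIntegral_coe)
    have hNa3 : Na ≠ 3 ∧ Na ≠ -3 := by
      constructor <;> intro hcon
      · exact hna3.1 (by rw [← hNa, hcon]; norm_num)
      · exact hna3.2 (by rw [← hNa, hcon]; norm_num)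
    have hNb3 : Nb ≠ 3 ∧ Nb ≠ -3 := by
      constructor <;> intro hcon
      · exact hnb3.1 (by rw [← hNb, hcon]; norm_num)
      · exact hnb3.2 (by rw [← hNb, hcon]; norm_num)
    have hdvd9 : Na ∣ 9 := ⟨Nb, h9.symm⟩
    have hb1 : -9 ≤ Na := by
      have := Int.le_of_dvd (by norm_num) ((neg_dvd).mpr hdvd9)
      omega
    have hb2 : Na ≤ 9 := Int.le_of_dvd (by norm_num) hdvd9
    have hcases : Na = 1 ∨ Na = -1 ∨ (Na = 9 ∧ Nb = 1) ∨ (Na = -9 ∧ Nb = -1) := by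
      interval_cases Na <;> omega
    rcases hcases with h | h | ⟨-, h⟩ | ⟨-, h⟩
    · exact Or.inl (hunit a xa ya hxa (Or.inl (by rw [← hNa, h]; norm_num)))
    · exact Or.inl (hunit a xa ya hxa (Or.inr (by rw [← hNa, h]; norm_num)))
    · exact Or.inr (hunit b xb yb hxb (Or.inl (by rw [← hNb, h]; norm_num)))
    · exact Or.inr (hunit b xb yb hxb (Or.inr (by rw [← hNb, h]; norm_num)))
  have h3prime : Prime (3 : NumberField.RingOfIntegers K) :=
    (UniqueFactorizationMonoid.irreducible_iff_prime).mp h3irr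
  -- 3 divides (√m - 1)(√m + 1)
  have hmc : (m : K) = 3 * ((12*(2*n+1)^2 - 1 : ℕ) : K) + 1 := by
    exact_mod_cast congrArg (Nat.cast : ℕ → K) hm3c
  set S : NumberField.RingOfIntegers K := ⟨s, hints⟩ with hSdef
  have hdvdprod : (3 : NumberField.RingOfIntegers K) ∣ (S - 1) * (S + 1) := by
    refine ⟨((12*(2*n+1)^2 - 1 : ℕ) : NumberField.RingOfIntegers K), ?_⟩
    rw [← NumberField.RingOfIntegers.eq_iff]
    simp only [map_mul, map_sub, map_add, map_one, map_ofNat, map_natCast]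
    show (s - 1) * (s + 1) = 3 * _
    linear_combination hs2 + hmc
  rcases h3prime.2.2 _ _ hdvdprod with hd | hd
  · obtain ⟨d, hd'⟩ := hd
    obtain ⟨x, y, hxy⟩ := hrep (d : K)
    have hdK : s - 1 = 3 * ((d : K)) := by
      have := congrArg (algebraMap (NumberField.RingOfIntegers K) K) hd'
      simp only [map_mul, map_sub, map_one, map_ofNat] at this; exact this
    rw [hxy] at hdK
    have h0 : algebraMap ℚ K (3*x + 1) + algebraMap ℚ K (3*y - 1) * s = 0 := by
      push_cast [map_add, map_sub, map_mul, map_one, map_ofNat]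
      linear_combination -hdK
    obtain ⟨h1', h2'⟩ := huniq _ _ h0
    exact hfinal x (hcoeff x y (by rw [← hxy]; exact d.isIntegral_coe)).1 (Or.inl h1')
  · obtain ⟨d, hd'⟩ := hd
    obtain ⟨x, y, hxy⟩ := hrep (d : K)
    have hdK : s + 1 = 3 * ((d : K)) := by
      have := congrArg (algebraMap (NumberField.RingOfIntegers K) K) hd'
      simp only [map_mul, map_add, map_one, map_ofNat] at this; exact this
    rw [hxy] at hdK
    have h0 : algebraMap ℚ K (3*x - 1) + algebraMap ℚ K (3*y - 1) * s = 0 := by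
      push_cast [map_add, map_sub, map_mul, map_one, map_ofNat]
      linear_combination -hdK
    obtain ⟨h1', h2'⟩ := huniq _ _ h0
    exact hfinal x (hcoeff x y (by rw [← hxy]; exact d.isIntegral_coe)).1 (Or.inr h1')
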